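/- In the Gaussian case with δ-pinning, the distribution ν_Λ^{ε} of pinned sites satisfies the lattice (or strong FKG) condition: ν_Λ^{ε}(A ∪ B) · ν_Λ^{ε}(A ∩ B) ≥ ν_Λ^{ε}(A) · ν_Λ^{ε}(B) for all A, B ⊆ Λ. -/

import Mathlib

open MeasureTheory Real

/-- Extension of a configuration on a finite set `D` by zero boundary conditions. -/
noncomputable def extendBy {d : ℕ} (D : Finset (Fin d → ℤ))
    (φ : {x // x ∈ D} → ℝ) : (Fin d → ℤ) → ℝ :=
  fun x => if h : x ∈ D then φ ⟨x, h⟩ else 0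

/-- The Gaussian Hamiltonian `(β/2) ∑_{x,y} p(x-y) (ψ_x - ψ_y)²/2` in the volume `D`. -/
noncomputable def gaussH {d : ℕ} (p : (Fin d → ℤ) → ℝ) (β : ℝ)
    (D : Finset (Fin d → ℤ)) (ψ : (Fin d → ℤ) → ℝ) : ℝ :=
  (β / 2) * ∑' q : (Fin d → ℤ) × (Fin d → ℤ),
    if q.1 ∈ D ∨ q.2 ∈ D then p (q.1 - q.2) * ((ψ q.1 - ψ q.2) ^ 2 / 2) else 0

/-- Partition function of the free Gaussian field on `D` with `0`-boundary conditions. -/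
noncomputable def freeZ {d : ℕ} (p : (Fin d → ℤ) → ℝ) (β : ℝ)
    (D : Finset (Fin d → ℤ)) : ℝ :=
  ∫ φ : {x // x ∈ D} → ℝ, Real.exp (-(gaussH p β D (extendBy D φ)))

/-- Expectation of `f` under the free Gaussian field on `D` with `0`-boundary conditions. -/
noncomputable def freeAvg {d : ℕ} (p : (Fin d → ℤ) → ℝ) (β : ℝ)
    (D : Finset (Fin d → ℤ)) (f : ((Fin d → ℤ) → ℝ) → ℝ) : ℝ :=
  (freeZ p β D)⁻¹ *
    ∫ φ : {x // x ∈ D} → ℝ,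
      f (extendBy D φ) * Real.exp (-(gaussH p β D (extendBy D φ)))

/-- The single-site measure `dφ + ε δ₀(dφ)` of δ-pinning. -/
noncomputable def pinMeasure (ε : ℝ) : Measure ℝ :=
  volume + ENNReal.ofReal ε • Measure.dirac 0

instance pinMeasure.instSigmaFinite (ε : ℝ) : SigmaFinite (pinMeasure ε) := by
  have : IsFiniteMeasure (ENNReal.ofReal ε • (Measure.dirac (0 : ℝ))) := by
    constructor
    simp [ENNReal.ofReal_lt_top]
  unfold pinMeasure
  infer_instance

/-- Partition function of the Gaussian δ-pinning measure on `Λ`. -/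
noncomputable def pinZ {d : ℕ} (p : (Fin d → ℤ) → ℝ) (β : ℝ)
    (Λ : Finset (Fin d → ℤ)) (ε : ℝ) : ℝ :=
  ∫ φ : {x // x ∈ Λ} → ℝ, Real.exp (-(gaussH p β Λ (extendBy Λ φ)))
    ∂(Measure.pi fun _ => pinMeasure ε)

/-- Expectation of `f` under the Gaussian δ-pinning measure `μ_Λ^ε`. -/
noncomputable def pinAvg {d : ℕ} (p : (Fin d → ℤ) → ℝ) (β : ℝ)
    (Λ : Finset (Fin d → ℤ)) (ε : ℝ) (f : ((Fin d → ℤ) → ℝ) → ℝ) : ℝ :=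
  (pinZ p β Λ ε)⁻¹ *
    ∫ φ : {x // x ∈ Λ} → ℝ,
      f (extendBy Λ φ) * Real.exp (-(gaussH p β Λ (extendBy Λ φ)))
      ∂(Measure.pi fun _ => pinMeasure ε)

/-- The distribution of pinned sites `ν_Λ^ε(A) = ε^{|A|} Z_{Λ\A} / Z_Λ^ε`. -/
noncomputable def nuPin {d : ℕ} (p : (Fin d → ℤ) → ℝ) (β : ℝ)
    (Λ : Finset (Fin d → ℤ)) (ε : ℝ) (A : Finset (Fin d → ℤ)) : ℝ :=
  ε ^ A.card * freeZ p β (Λ \ A) / pinZ p β Λ ε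



/-! ### Auxiliary development -/

namespace NuPinAux

open Finset

variable {d : ℕ}

/-- Support condition: `ψ` vanishes outside `S`. -/
def Spt (S : Finset (Fin d → ℤ)) (ψ : (Fin d → ℤ) → ℝ) : Prop :=
  ∀ y, y ∉ S → ψ y = 0

/-- Global quadratic energy (no volume cutoff). -/
noncomputable def Qc (p : (Fin d → ℤ) → ℝ) (β : ℝ) (ψ : (Fin d → ℤ) → ℝ) : ℝ :=
  (β / 2) * ∑' q : (Fin d → ℤ) × (Fin d → ℤ), p (q.1 - q.2) * ((ψ q.1 - ψ q.2) ^ 2 / 2)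

/-- Boundary weight `w_S(x) = ∑_{y ∉ S} p (x - y)`. -/
noncomputable def wt (p : (Fin d → ℤ) → ℝ) (S : Finset (Fin d → ℤ)) (x : Fin d → ℤ) : ℝ :=
  ∑' y, if y ∈ S then 0 else p (x - y)

/-- The finite-volume bilinear cross term. -/
noncomputable def Bq (p : (Fin d → ℤ) → ℝ) (β : ℝ) (S : Finset (Fin d → ℤ))
    (ψ χ : (Fin d → ℤ) → ℝ) : ℝ :=
  (β / 2) * ((∑ x ∈ S, ∑ y ∈ S, p (x - y) * ((ψ x - ψ y) * (χ x - χ y)))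
    + ∑ x ∈ S, 2 * wt p S x * (ψ x * χ x))

/-- Kronecker delta configuration at `x̂`. -/
noncomputable def dlt (z : Fin d → ℤ) : (Fin d → ℤ) → ℝ :=
  fun y => if y = z then 1 else 0

/-- The "pinning constant": infimum of the energy over configurations supported in
`insert z S` with value `1` at `z`. -/
noncomputable def kap (p : (Fin d → ℤ) → ℝ) (β : ℝ) (S : Finset (Fin d → ℤ))
    (z : Fin d → ℤ) : ℝ :=
  sInf (Qc p β '' {ψ | Spt (insert z S) ψ ∧ ψ z = 1})

section Basic

variable {p : (Fin d → ℤ) → ℝ} {β : ℝ}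

lemma summable_p (hp_nonneg : ∀ x, 0 ≤ p x) (hp_sum : ∑' x, p x = 1) : Summable p := by
  by_contra h
  rw [tsum_eq_zero_of_not_summable h] at hp_sum
  norm_num at hp_sum

lemma summable_p_shift (hsum : Summable p) (x : Fin d → ℤ) :
    Summable fun y => p (x - y) := by
  have : Function.Injective (fun y : Fin d → ℤ => x - y) := fun a b h => by
    simpa using sub_right_injective h
  exact hsum.comp_injective this

lemma summable_wt (hp_nonneg : ∀ x, 0 ≤ p x) (hsum : Summable p)
    (S : Finset (Fin d → ℤ)) (x : Fin d → ℤ) :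
    Summable fun y => if y ∈ S then (0:ℝ) else p (x - y) := by
  refine Summable.of_nonneg_of_le (fun y => ?_) (fun y => ?_) (summable_p_shift hsum x)
  · split <;> simp [hp_nonneg]
  · split <;> simp [hp_nonneg]

lemma wt_nonneg (hp_nonneg : ∀ x, 0 ≤ p x) (S : Finset (Fin d → ℤ)) (x : Fin d → ℤ) :
    0 ≤ wt p S x := by
  refine tsum_nonneg fun y => ?_
  split <;> simp [hp_nonneg]

lemma le_wt (hp_nonneg : ∀ x, 0 ≤ p x) (hsum : Summable p)
    {S : Finset (Fin d → ℤ)} {z : Fin d → ℤ} (hz : z ∉ S) (x : Fin d → ℤ) :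
    p (x - z) ≤ wt p S x := by
  have h := Summable.le_tsum (summable_wt hp_nonneg hsum S x) z
    (fun y _ => by split <;> simp [hp_nonneg])
  simpa [hz, wt] using h

lemma Qc_nonneg (hp_nonneg : ∀ x, 0 ≤ p x) (hβ : 0 ≤ β) (ψ : (Fin d → ℤ) → ℝ) :
    0 ≤ Qc p β ψ := by
  have : 0 ≤ ∑' q : (Fin d → ℤ) × (Fin d → ℤ), p (q.1 - q.2) * ((ψ q.1 - ψ q.2) ^ 2 / 2) :=
    tsum_nonneg fun q => mul_nonneg (hp_nonneg _) (by positivity)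
  unfold Qc
  exact mul_nonneg (by linarith) this

end Basic

section QFormula

variable {p : (Fin d → ℤ) → ℝ} {β : ℝ}

/-- Finite formula for the energy of a configuration supported in `S`. -/
lemma qformula (hp_nonneg : ∀ x, 0 ≤ p x) (hp_symm : ∀ x, p (-x) = p x)
    (hsum : Summable p) (S : Finset (Fin d → ℤ)) (ψ : (Fin d → ℤ) → ℝ) (hψ : Spt S ψ) :
    Qc p β ψ = (β / 2) * ((∑ x ∈ S, ∑ y ∈ S, p (x - y) * ((ψ x - ψ y) ^ 2 / 2))
      + ∑ x ∈ S, wt p S x * ψ x ^ 2) := by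
  classical
  set f : (Fin d → ℤ) × (Fin d → ℤ) → ℝ :=
    fun q => p (q.1 - q.2) * ((ψ q.1 - ψ q.2) ^ 2 / 2) with hf
  set C : ℝ := (∑ x ∈ S, ψ x ^ 2) / 2 with hC
  have hC0 : 0 ≤ C := by positivity
  have hCle : ∀ x ∈ S, ψ x ^ 2 / 2 ≤ C := by
    intro x hx
    have : ψ x ^ 2 ≤ ∑ y ∈ S, ψ y ^ 2 :=
      Finset.single_le_sum (fun y _ => sq_nonneg (ψ y)) hx
    rw [hC]; linarith
  set f1 : (Fin d → ℤ) × (Fin d → ℤ) → ℝ :=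
    fun q => if q.1 ∈ S ∧ q.2 ∈ S then f q else 0 with hf1
  set f2 : (Fin d → ℤ) × (Fin d → ℤ) → ℝ :=
    fun q => if q.1 ∈ S ∧ q.2 ∉ S then f q else 0 with hf2
  set f3 : (Fin d → ℤ) × (Fin d → ℤ) → ℝ :=
    fun q => if q.1 ∉ S ∧ q.2 ∈ S then f q else 0 with hf3
  have hfnn : ∀ q, 0 ≤ f q := fun q => by
    have := hp_nonneg (q.1 - q.2); positivity
  have hsplit : ∀ q, f q = f1 q + f2 q + f3 q := by
    intro q
    by_cases h1 : q.1 ∈ S <;> by_cases h2 : q.2 ∈ S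
    · simp [hf1, hf2, hf3, h1, h2]
    · simp [hf1, hf2, hf3, h1, h2]
    · simp [hf1, hf2, hf3, h1, h2]
    · have hz : f q = 0 := by
        show p (q.1 - q.2) * ((ψ q.1 - ψ q.2) ^ 2 / 2) = 0
        rw [hψ _ h1, hψ _ h2]; ring
      simp [hf1, hf2, hf3, h1, h2, hz]
  -- the majorant
  set g : (Fin d → ℤ) × (Fin d → ℤ) → ℝ :=
    fun q => if q.1 ∈ S then p (q.1 - q.2) * C else 0 with hg
  have hgnn : ∀ q, 0 ≤ g q := by
    intro q; rw [hg]; dsimp only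
    split
    · exact mul_nonneg (hp_nonneg _) hC0
    · exact le_rfl
  have hgsum : Summable g := by
    refine (summable_prod_of_nonneg hgnn).2 ⟨fun x => ?_, ?_⟩
    · by_cases hx : x ∈ S
      · simpa [hg, hx] using ((summable_p_shift hsum x).mul_right C)
      · simpa [hg, hx] using summable_zero
    · refine summable_of_ne_finset_zero (s := S) ?_
      intro x hx
      simp [hg, hx]
  have hf2sum : Summable f2 := by
    refine Summable.of_nonneg_of_le (fun q => ?_) (fun q => ?_) hgsum
    · show 0 ≤ (if q.1 ∈ S ∧ q.2 ∉ S then f q else 0)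
      split
      · exact hfnn q
      · exact le_rfl
    · show (if q.1 ∈ S ∧ q.2 ∉ S then f q else 0) ≤ g q
      by_cases h : q.1 ∈ S ∧ q.2 ∉ S
      · rw [if_pos h]
        show p (q.1 - q.2) * ((ψ q.1 - ψ q.2) ^ 2 / 2) ≤ g q
        have hgq : g q = p (q.1 - q.2) * C := by
          show (if q.1 ∈ S then p (q.1 - q.2) * C else 0) = _
          rw [if_pos h.1]
        rw [hgq, hψ _ h.2]
        have he : (ψ q.1 - 0) ^ 2 / 2 = ψ q.1 ^ 2 / 2 := by ring
        rw [he]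
        exact mul_le_mul_of_nonneg_left (hCle _ h.1) (hp_nonneg _)
      · rw [if_neg h]
        exact hgnn q
  have hswap : ∀ q : (Fin d → ℤ) × (Fin d → ℤ), f3 q = f2 q.swap := by
    intro q
    rw [hf3, hf2]
    dsimp only [Prod.fst_swap, Prod.snd_swap]
    by_cases h : ¬q.1 ∈ S ∧ q.2 ∈ S
    · rw [if_pos h, if_pos ⟨h.2, h.1⟩]
      show p (q.1 - q.2) * ((ψ q.1 - ψ q.2) ^ 2 / 2)
        = p (q.swap.1 - q.swap.2) * ((ψ q.swap.1 - ψ q.swap.2) ^ 2 / 2)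
      simp only [Prod.fst_swap, Prod.snd_swap]
      have h1 : p (q.2 - q.1) = p (q.1 - q.2) := by
        rw [← neg_sub q.1 q.2, hp_symm]
      rw [h1]; ring
    · rw [if_neg h, if_neg (by tauto)]
  have hf3sum : Summable f3 := by
    have : Summable fun q : (Fin d → ℤ) × (Fin d → ℤ) => f2 q.swap := hf2sum.prod_symm
    exact this.congr fun q => (hswap q).symm
  have hf1sum : Summable f1 := by
    refine summable_of_ne_finset_zero (s := S ×ˢ S) ?_
    intro q hq
    rw [Finset.mem_product] at hq
    show (if q.1 ∈ S ∧ q.2 ∈ S then f q else 0) = 0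
    exact if_neg hq
  have hfsum : Summable f := by
    refine ((hf1sum.add hf2sum).add hf3sum).congr fun q => (hsplit q).symm
  -- tsum computations
  have ht : ∑' q, f q = (∑' q, f1 q) + (∑' q, f2 q) + (∑' q, f3 q) := by
    calc ∑' q, f q = ∑' q, (f1 q + f2 q + f3 q) := tsum_congr hsplit
    _ = _ := by
      rw [Summable.tsum_add (hf1sum.add hf2sum) hf3sum, Summable.tsum_add hf1sum hf2sum]
  have ht1 : ∑' q, f1 q = ∑ x ∈ S, ∑ y ∈ S, p (x - y) * ((ψ x - ψ y) ^ 2 / 2) := by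
    rw [tsum_eq_sum (s := S ×ˢ S) (fun q hq => by
      rw [Finset.mem_product] at hq
      show (if q.1 ∈ S ∧ q.2 ∈ S then f q else 0) = 0
      exact if_neg hq)]
    rw [Finset.sum_product]
    refine Finset.sum_congr rfl fun x hx => Finset.sum_congr rfl fun y hy => ?_
    show (if x ∈ S ∧ y ∈ S then f (x, y) else 0) = p (x - y) * ((ψ x - ψ y) ^ 2 / 2)
    rw [if_pos ⟨hx, hy⟩]
  have ht2 : ∑' q, f2 q = ∑ x ∈ S, wt p S x * (ψ x ^ 2 / 2) := by
    have hform : ∀ q : (Fin d → ℤ) × (Fin d → ℤ),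
        f2 q = if q.1 ∈ S then (if q.2 ∈ S then 0 else p (q.1 - q.2)) * (ψ q.1 ^ 2 / 2)
          else 0 := by
      intro q
      show (if q.1 ∈ S ∧ q.2 ∉ S then f q else 0) = _
      by_cases h1 : q.1 ∈ S <;> by_cases h2 : q.2 ∈ S
      · simp [h1, h2]
      · have hval : f q = p (q.1 - q.2) * (ψ q.1 ^ 2 / 2) := by
          show p (q.1 - q.2) * ((ψ q.1 - ψ q.2) ^ 2 / 2) = _
          rw [hψ _ h2]; ring
        simp [h1, h2, hval]
      · simp [h1, h2]
      · simp [h1, h2]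
    have hf2sum' := hf2sum.congr hform
    calc ∑' q, f2 q = ∑' q : (Fin d → ℤ) × (Fin d → ℤ),
        (if q.1 ∈ S then (if q.2 ∈ S then 0 else p (q.1 - q.2)) * (ψ q.1 ^ 2 / 2) else 0) :=
      tsum_congr hform
    _ = ∑' (x) (y), (if x ∈ S then (if y ∈ S then 0 else p (x - y)) * (ψ x ^ 2 / 2) else 0) :=
      Summable.tsum_prod' hf2sum' fun b => hf2sum'.prod_factor b
    _ = ∑ x ∈ S, wt p S x * (ψ x ^ 2 / 2) := by
      rw [tsum_eq_sum (s := S) (fun x hx => by simp [hx])]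
      refine Finset.sum_congr rfl fun x hx => ?_
      simp only [hx, if_true]
      rw [tsum_mul_right]
      rfl
  have ht3 : ∑' q, f3 q = ∑ x ∈ S, wt p S x * (ψ x ^ 2 / 2) := by
    calc ∑' q, f3 q = ∑' q : (Fin d → ℤ) × (Fin d → ℤ), f2 q.swap := tsum_congr hswap
    _ = ∑' q, f2 q := by
      simpa using (Equiv.prodComm (Fin d → ℤ) (Fin d → ℤ)).tsum_eq (fun q => f2 q)
    _ = _ := ht2
  have hW : (∑ x ∈ S, wt p S x * (ψ x ^ 2 / 2)) + (∑ x ∈ S, wt p S x * (ψ x ^ 2 / 2))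
      = ∑ x ∈ S, wt p S x * ψ x ^ 2 := by
    rw [← Finset.sum_add_distrib]
    exact Finset.sum_congr rfl fun x _ => by ring
  unfold Qc
  rw [← hf, ht, ht1, ht2, ht3, ← hW]
  ring

/-- Polarization: energy of a sum. -/
lemma Qc_add (hp_nonneg : ∀ x, 0 ≤ p x) (hp_symm : ∀ x, p (-x) = p x)
    (hsum : Summable p) (S : Finset (Fin d → ℤ)) (ψ χ : (Fin d → ℤ) → ℝ)
    (hψ : Spt S ψ) (hχ : Spt S χ) :
    Qc p β (ψ + χ) = Qc p β ψ + Bq p β S ψ χ + Qc p β χ := by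
  have hsp : Spt S (ψ + χ) := fun y hy => by simp [Pi.add_apply, hψ y hy, hχ y hy]
  rw [qformula (β := β) hp_nonneg hp_symm hsum S _ hsp,
    qformula (β := β) hp_nonneg hp_symm hsum S ψ hψ,
    qformula (β := β) hp_nonneg hp_symm hsum S χ hχ]
  unfold Bq
  have e1 : (∑ x ∈ S, ∑ y ∈ S, p (x - y) * (((ψ + χ) x - (ψ + χ) y) ^ 2 / 2))
      = (∑ x ∈ S, ∑ y ∈ S, (p (x - y) * ((ψ x - ψ y) ^ 2 / 2)
         + p (x - y) * ((ψ x - ψ y) * (χ x - χ y)) + p (x - y) * ((χ x - χ y) ^ 2 / 2))) := by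
    refine Finset.sum_congr rfl fun x _ => Finset.sum_congr rfl fun y _ => ?_
    simp only [Pi.add_apply]; ring
  have e2 : (∑ x ∈ S, wt p S x * ((ψ + χ) x) ^ 2)
      = ∑ x ∈ S, (wt p S x * ψ x ^ 2 + 2 * wt p S x * (ψ x * χ x) + wt p S x * χ x ^ 2) := by
    refine Finset.sum_congr rfl fun x _ => ?_
    simp only [Pi.add_apply]; ring
  rw [e1, e2]
  simp only [Finset.sum_add_distrib]
  ring

lemma Qc_smul (hp_nonneg : ∀ x, 0 ≤ p x) (hp_symm : ∀ x, p (-x) = p x)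
    (hsum : Summable p) (S : Finset (Fin d → ℤ)) (ψ : (Fin d → ℤ) → ℝ)
    (hψ : Spt S ψ) (t : ℝ) :
    Qc p β (t • ψ) = t ^ 2 * Qc p β ψ := by
  have hsp : Spt S (t • ψ) := fun y hy => by simp [hψ y hy]
  rw [qformula (β := β) hp_nonneg hp_symm hsum S _ hsp,
    qformula (β := β) hp_nonneg hp_symm hsum S ψ hψ]
  have e1 : ∑ x ∈ S, ∑ y ∈ S, p (x - y) * (((t • ψ) x - (t • ψ) y) ^ 2 / 2)
      = t ^ 2 * ∑ x ∈ S, ∑ y ∈ S, p (x - y) * ((ψ x - ψ y) ^ 2 / 2) := by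
    rw [Finset.mul_sum]
    refine Finset.sum_congr rfl fun x _ => ?_
    rw [Finset.mul_sum]
    refine Finset.sum_congr rfl fun y _ => ?_
    simp only [Pi.smul_apply, smul_eq_mul]; ring
  have e2 : ∑ x ∈ S, wt p S x * ((t • ψ) x) ^ 2
      = t ^ 2 * ∑ x ∈ S, wt p S x * ψ x ^ 2 := by
    rw [Finset.mul_sum]
    refine Finset.sum_congr rfl fun x _ => ?_
    simp only [Pi.smul_apply, smul_eq_mul]; ring
  rw [e1, e2]; ring

lemma Bq_smul_left (S : Finset (Fin d → ℤ)) (ψ χ : (Fin d → ℤ) → ℝ) (t : ℝ) :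
    Bq p β S (t • ψ) χ = t * Bq p β S ψ χ := by
  unfold Bq
  have e1 : ∑ x ∈ S, ∑ y ∈ S, p (x - y) * (((t • ψ) x - (t • ψ) y) * (χ x - χ y))
      = t * ∑ x ∈ S, ∑ y ∈ S, p (x - y) * ((ψ x - ψ y) * (χ x - χ y)) := by
    rw [Finset.mul_sum]
    refine Finset.sum_congr rfl fun x _ => ?_
    rw [Finset.mul_sum]
    refine Finset.sum_congr rfl fun y _ => ?_
    simp only [Pi.smul_apply, smul_eq_mul]; ring
  have e2 : ∑ x ∈ S, 2 * wt p S x * ((t • ψ) x * χ x)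
      = t * ∑ x ∈ S, 2 * wt p S x * (ψ x * χ x) := by
    rw [Finset.mul_sum]
    refine Finset.sum_congr rfl fun x _ => ?_
    simp only [Pi.smul_apply, smul_eq_mul]; ring
  rw [e1, e2]; ring

lemma Bq_sub_left (S : Finset (Fin d → ℤ)) (ψ₁ ψ₂ χ : (Fin d → ℤ) → ℝ) :
    Bq p β S (ψ₁ - ψ₂) χ = Bq p β S ψ₁ χ - Bq p β S ψ₂ χ := by
  unfold Bq
  have e1 : ∑ x ∈ S, ∑ y ∈ S, p (x - y) * (((ψ₁ - ψ₂) x - (ψ₁ - ψ₂) y) * (χ x - χ y))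
      = (∑ x ∈ S, ∑ y ∈ S, p (x - y) * ((ψ₁ x - ψ₁ y) * (χ x - χ y)))
        - ∑ x ∈ S, ∑ y ∈ S, p (x - y) * ((ψ₂ x - ψ₂ y) * (χ x - χ y)) := by
    rw [← Finset.sum_sub_distrib]
    refine Finset.sum_congr rfl fun x _ => ?_
    rw [← Finset.sum_sub_distrib]
    refine Finset.sum_congr rfl fun y _ => ?_
    simp only [Pi.sub_apply]; ring
  have e2 : ∑ x ∈ S, 2 * wt p S x * ((ψ₁ - ψ₂) x * χ x)
      = (∑ x ∈ S, 2 * wt p S x * (ψ₁ x * χ x)) - ∑ x ∈ S, 2 * wt p S x * (ψ₂ x * χ x) := by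
    rw [← Finset.sum_sub_distrib]
    refine Finset.sum_congr rfl fun x _ => ?_
    simp only [Pi.sub_apply]; ring
  rw [e1, e2]; ring

lemma Bq_comm (S : Finset (Fin d → ℤ)) (ψ χ : (Fin d → ℤ) → ℝ) :
    Bq p β S ψ χ = Bq p β S χ ψ := by
  unfold Bq
  have e1 : ∑ x ∈ S, ∑ y ∈ S, p (x - y) * ((ψ x - ψ y) * (χ x - χ y))
      = ∑ x ∈ S, ∑ y ∈ S, p (x - y) * ((χ x - χ y) * (ψ x - ψ y)) :=
    Finset.sum_congr rfl fun x _ => Finset.sum_congr rfl fun y _ => by ring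
  have e2 : ∑ x ∈ S, 2 * wt p S x * (ψ x * χ x)
      = ∑ x ∈ S, 2 * wt p S x * (χ x * ψ x) :=
    Finset.sum_congr rfl fun x _ => by ring
  rw [e1, e2]

lemma Bq_smul_right (S : Finset (Fin d → ℤ)) (ψ χ : (Fin d → ℤ) → ℝ) (t : ℝ) :
    Bq p β S ψ (t • χ) = t * Bq p β S ψ χ := by
  rw [Bq_comm, Bq_smul_left, Bq_comm]

lemma first_var {a b : ℝ} (hb : 0 ≤ b) (h : ∀ t : ℝ, 0 ≤ a * t + b * t ^ 2) :
    a = 0 := by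
  by_contra ha
  have h2b : (0:ℝ) < 2 * b + 1 := by linarith
  have ht := h (-a / (2 * b + 1))
  have ha2 : 0 < a ^ 2 := by positivity
  have expr_eq : a * (-a / (2 * b + 1)) + b * (-a / (2 * b + 1)) ^ 2
      = -(a ^ 2 * (b + 1)) / (2 * b + 1) ^ 2 := by
    field_simp
    ring
  rw [expr_eq] at ht
  have hneg : -(a ^ 2 * (b + 1)) / (2 * b + 1) ^ 2 < 0 := by
    apply div_neg_of_neg_of_pos
    · nlinarith
    · positivity
  linarith

end QFormula

section Coercive

variable {p : (Fin d → ℤ) → ℝ} {β : ℝ}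

/-- Coercivity of the energy in the non-degenerate case. -/
lemma coercive (hβ : 0 < β) (hp_nonneg : ∀ x, 0 ≤ p x) (hp_symm : ∀ x, p (-x) = p x)
    (hsum : Summable p) {v : Fin d → ℤ} (hv : v ≠ 0) (hpv : 0 < p v)
    (S : Finset (Fin d → ℤ)) (ψ : (Fin d → ℤ) → ℝ) (hψ : Spt S ψ) :
    (β * p v / (4 * ((S.card : ℝ) ^ 3 + 1))) * ∑ x ∈ S, ψ x ^ 2 ≤ Qc p β ψ := by
  classical
  set n : ℕ := S.card with hn
  set A : ℝ := ∑ x ∈ S, ∑ y ∈ S, p (x - y) * ((ψ x - ψ y) ^ 2 / 2) with hA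
  set W : ℝ := ∑ x ∈ S, wt p S x * ψ x ^ 2 with hWdef
  have hAnn : 0 ≤ A := Finset.sum_nonneg fun x _ => Finset.sum_nonneg fun y _ =>
    mul_nonneg (hp_nonneg _) (by positivity)
  have hWnn : 0 ≤ W := Finset.sum_nonneg fun x _ =>
    mul_nonneg (wt_nonneg hp_nonneg S x) (sq_nonneg _)
  set Stot : ℝ := A + W with hStot
  have hStotnn : 0 ≤ Stot := by rw [hStot]; linarith
  -- pointwise bound
  have key : ∀ x₀ ∈ S, ψ x₀ ^ 2 ≤ (n : ℝ) * ((n : ℝ) * (2 * Stot / p v)) := by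
    intro x₀ hx₀
    set u : ℕ → (Fin d → ℤ) := fun k => x₀ + k • v with hu
    have hstep : ∀ k : ℕ, u k - u (k + 1) = -v := by
      intro k
      rw [hu]
      simp only
      rw [succ_nsmul]
      abel
    have hpstep : ∀ k : ℕ, p (u k - u (k + 1)) = p v := by
      intro k; rw [hstep k, hp_symm]
    have huinj : Function.Injective u := by
      intro a b hab
      have h1 : (a : ℤ) • v = (b : ℤ) • v := by
        have := add_left_cancel hab
        rwa [natCast_zsmul, natCast_zsmul]
      obtain ⟨i, hi⟩ : ∃ i, v i ≠ 0 := by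
        by_contra hc
        push_neg at hc
        exact hv (funext hc)
      have h2 : (a : ℤ) * v i = (b : ℤ) * v i := by
        have := congrFun h1 i
        simpa [Pi.smul_apply, smul_eq_mul] using this
      have : (a : ℤ) = (b : ℤ) := mul_right_cancel₀ hi h2
      exact_mod_cast this
    have hex : ∃ k, k ≤ n ∧ u k ∉ S := by
      by_contra hall
      push_neg at hall
      have himg : (Finset.range (n + 1)).image u ⊆ S := by
        intro y hy
        rcases Finset.mem_image.1 hy with ⟨k, hk, rfl⟩
        exact hall k (Nat.lt_succ_iff.mp (Finset.mem_range.1 hk))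
      have hcard : n + 1 ≤ n := by
        calc n + 1 = ((Finset.range (n + 1)).image u).card := by
              rw [Finset.card_image_of_injective _ huinj, Finset.card_range]
        _ ≤ S.card := Finset.card_le_card himg
        _ = n := hn.symm
      omega
    have hex' : ∃ k, u k ∉ S := ⟨hex.choose, hex.choose_spec.2⟩
    set K : ℕ := Nat.find hex' with hK
    have hKnotin : u K ∉ S := Nat.find_spec hex'
    have hKmin : ∀ j, j < K → u j ∈ S := by
      intro j hj
      by_contra hc
      have h2 : K ≤ j := Nat.find_le hc
      omega
    have hKle : K ≤ n := le_trans (Nat.find_le hex.choose_spec.2) hex.choose_spec.1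
    have hKpos : 1 ≤ K := by
      rcases Nat.eq_zero_or_pos K with h0 | h1
      · exfalso
        apply hKnotin
        rw [h0]
        have : u 0 = x₀ := by rw [hu]; simp
        rw [this]; exact hx₀
      · exact h1
    -- telescoping
    have htel : ψ x₀ = ∑ k ∈ Finset.range K, (ψ (u k) - ψ (u (k + 1))) := by
      rw [Finset.sum_range_sub' (fun k => ψ (u k)) K]
      rw [hψ _ hKnotin]
      have : u 0 = x₀ := by rw [hu]; simp
      rw [this, sub_zero]
    -- bound on each difference
    have hdk : ∀ k, k < K → (ψ (u k) - ψ (u (k + 1))) ^ 2 ≤ 2 * Stot / p v := by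
      intro k hk
      rw [le_div_iff₀ hpv]
      by_cases hin : u (k + 1) ∈ S
      · -- both endpoints in S: use the pair term
        have t1 : p (u k - u (k + 1)) * ((ψ (u k) - ψ (u (k + 1))) ^ 2 / 2)
            ≤ ∑ y ∈ S, p (u k - y) * ((ψ (u k) - ψ y) ^ 2 / 2) :=
          Finset.single_le_sum (f := fun y => p (u k - y) * ((ψ (u k) - ψ y) ^ 2 / 2))
            (fun y _ => mul_nonneg (hp_nonneg _) (by positivity)) hin
        have t2 : (∑ y ∈ S, p (u k - y) * ((ψ (u k) - ψ y) ^ 2 / 2)) ≤ A := by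
          rw [hA]
          exact Finset.single_le_sum
            (f := fun x => ∑ y ∈ S, p (x - y) * ((ψ x - ψ y) ^ 2 / 2))
            (fun x _ => Finset.sum_nonneg fun y _ =>
              mul_nonneg (hp_nonneg _) (by positivity)) (hKmin k hk)
        rw [hpstep k] at t1
        have : p v * ((ψ (u k) - ψ (u (k + 1))) ^ 2 / 2) ≤ Stot := by
          rw [hStot]; linarith
        nlinarith [this]
      · -- exit step: use the boundary weight
        have hz : ψ (u (k + 1)) = 0 := hψ _ hin
        have hw : p v ≤ wt p S (u k) := by
          have := le_wt hp_nonneg hsum hin (u k)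
          rwa [hpstep k] at this
        have t1 : wt p S (u k) * ψ (u k) ^ 2 ≤ W := by
          rw [hWdef]
          exact Finset.single_le_sum
            (fun x _ => mul_nonneg (wt_nonneg hp_nonneg S x) (sq_nonneg _)) (hKmin k hk)
        have t2 : p v * ψ (u k) ^ 2 ≤ wt p S (u k) * ψ (u k) ^ 2 :=
          mul_le_mul_of_nonneg_right hw (sq_nonneg _)
        rw [hz, sub_zero]
        have : p v * ψ (u k) ^ 2 ≤ Stot := by rw [hStot]; linarith
        nlinarith [this]
    -- Cauchy–Schwarz
    have hcs : ψ x₀ ^ 2 ≤ (K : ℝ) * ∑ k ∈ Finset.range K, (ψ (u k) - ψ (u (k + 1))) ^ 2 := by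
      rw [htel]
      have := sq_sum_le_card_mul_sum_sq (s := Finset.range K)
        (f := fun k => ψ (u k) - ψ (u (k + 1)))
      simpa [Finset.card_range] using this
    have hsum2 : ∑ k ∈ Finset.range K, (ψ (u k) - ψ (u (k + 1))) ^ 2
        ≤ (K : ℝ) * (2 * Stot / p v) := by
      have := Finset.sum_le_card_nsmul (Finset.range K)
        (fun k => (ψ (u k) - ψ (u (k + 1))) ^ 2) (2 * Stot / p v)
        (fun k hk => hdk k (Finset.mem_range.1 hk))
      simpa [Finset.card_range, nsmul_eq_mul] using this
    have hKn : (K : ℝ) ≤ (n : ℝ) := by exact_mod_cast hKle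
    have hKnn : (0 : ℝ) ≤ (K : ℝ) := Nat.cast_nonneg _
    have hM : 0 ≤ 2 * Stot / p v := by positivity
    calc ψ x₀ ^ 2 ≤ (K : ℝ) * ∑ k ∈ Finset.range K, (ψ (u k) - ψ (u (k + 1))) ^ 2 := hcs
    _ ≤ (K : ℝ) * ((K : ℝ) * (2 * Stot / p v)) := by
        apply mul_le_mul_of_nonneg_left hsum2 hKnn
    _ ≤ (n : ℝ) * ((n : ℝ) * (2 * Stot / p v)) := by
        have h2 : (K : ℝ) * (K : ℝ) ≤ (n : ℝ) * (n : ℝ) :=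
          mul_le_mul hKn hKn hKnn (Nat.cast_nonneg n)
        calc (K : ℝ) * ((K : ℝ) * (2 * Stot / p v))
            = ((K : ℝ) * (K : ℝ)) * (2 * Stot / p v) := by ring
        _ ≤ ((n : ℝ) * (n : ℝ)) * (2 * Stot / p v) := mul_le_mul_of_nonneg_right h2 hM
        _ = (n : ℝ) * ((n : ℝ) * (2 * Stot / p v)) := by ring
  -- sum the pointwise bound
  have hsumbound : ∑ x ∈ S, ψ x ^ 2 ≤ (n : ℝ) * ((n : ℝ) * ((n : ℝ) * (2 * Stot / p v))) := by
    have := Finset.sum_le_card_nsmul S (fun x => ψ x ^ 2)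
      ((n : ℝ) * ((n : ℝ) * (2 * Stot / p v))) (fun x hx => key x hx)
    calc ∑ x ∈ S, ψ x ^ 2 ≤ S.card • ((n : ℝ) * ((n : ℝ) * (2 * Stot / p v))) := this
    _ = (n : ℝ) * ((n : ℝ) * ((n : ℝ) * (2 * Stot / p v))) := by
        rw [← hn, nsmul_eq_mul]
  -- conclude
  rw [qformula (β := β) hp_nonneg hp_symm hsum S ψ hψ, ← hA]
  have hQ : (β / 2) * (A + ∑ x ∈ S, wt p S x * ψ x ^ 2) = (β / 2) * Stot := by
    rw [hStot, hWdef]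
  rw [hQ]
  have hc : 0 < β * p v / (4 * ((n : ℝ) ^ 3 + 1)) := by positivity
  calc (β * p v / (4 * ((n : ℝ) ^ 3 + 1))) * ∑ x ∈ S, ψ x ^ 2
      ≤ (β * p v / (4 * ((n : ℝ) ^ 3 + 1)))
        * ((n : ℝ) * ((n : ℝ) * ((n : ℝ) * (2 * Stot / p v)))) :=
        mul_le_mul_of_nonneg_left hsumbound hc.le
  _ ≤ (β / 2) * Stot := by
      have hne : ((n : ℝ) ^ 3 + 1) ≠ 0 := by positivity
      have hpvne : p v ≠ 0 := hpv.ne'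
      have heq : (β * p v / (4 * ((n : ℝ) ^ 3 + 1)))
          * ((n : ℝ) * ((n : ℝ) * ((n : ℝ) * (2 * Stot / p v))))
          = (β / 2) * Stot * ((n : ℝ) ^ 3 / ((n : ℝ) ^ 3 + 1)) := by
        field_simp
        ring
      rw [heq]
      have hr : (n : ℝ) ^ 3 / ((n : ℝ) ^ 3 + 1) ≤ 1 := by
        rw [div_le_one (by positivity)]; linarith
      exact mul_le_of_le_one_right (mul_nonneg (by linarith) hStotnn) hr

end Coercive

section ExtendBy

variable {p : (Fin d → ℤ) → ℝ} {β : ℝ}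

lemma spt_extendBy (S : Finset (Fin d → ℤ)) (φ : {x // x ∈ S} → ℝ) :
    Spt S (extendBy S φ) := fun y hy => by simp [extendBy, hy]

lemma extendBy_mem (S : Finset (Fin d → ℤ)) (φ : {x // x ∈ S} → ℝ) {x : Fin d → ℤ}
    (h : x ∈ S) : extendBy S φ x = φ ⟨x, h⟩ := by simp [extendBy, h]

lemma gaussH_eq_Qc (S : Finset (Fin d → ℤ)) (ψ : (Fin d → ℤ) → ℝ) (hψ : Spt S ψ) :
    gaussH p β S ψ = Qc p β ψ := by
  unfold gaussH Qc
  congr 1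
  refine tsum_congr fun q => ?_
  split
  · rfl
  · rename_i h
    push_neg at h
    rw [hψ _ h.1, hψ _ h.2]
    ring

lemma freeZ_eq (S : Finset (Fin d → ℤ)) :
    freeZ p β S = ∫ φ : {x // x ∈ S} → ℝ, Real.exp (-(Qc p β (extendBy S φ))) := by
  unfold freeZ
  congr 1
  funext φ
  rw [gaussH_eq_Qc S _ (spt_extendBy S φ)]

lemma freeZ_nonneg (S : Finset (Fin d → ℤ)) : 0 ≤ freeZ p β S := by
  rw [freeZ_eq]
  exact integral_nonneg fun φ => (Real.exp_pos _).le

lemma sum_sq_extendBy (S : Finset (Fin d → ℤ)) (φ : {x // x ∈ S} → ℝ) :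
    ∑ x ∈ S, (extendBy S φ x) ^ 2 = ∑ i, (φ i) ^ 2 := by
  rw [← Finset.sum_attach S fun x => (extendBy S φ x) ^ 2]
  refine Finset.sum_congr rfl fun i _ => by rw [extendBy_mem S φ i.2]

lemma continuous_extendBy_apply (S : Finset (Fin d → ℤ)) (x : Fin d → ℤ) :
    Continuous fun φ : {x // x ∈ S} → ℝ => extendBy S φ x := by
  by_cases h : x ∈ S
  · have e : (fun φ : {x // x ∈ S} → ℝ => extendBy S φ x) = fun φ => φ ⟨x, h⟩ := by
      funext φ; exact extendBy_mem S φ h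
    rw [e]; exact continuous_apply _
  · have e : (fun φ : {x // x ∈ S} → ℝ => extendBy S φ x) = fun _ => 0 := by
      funext φ; simp [extendBy, h]
    rw [e]; exact continuous_const

lemma continuous_QcExt (hp_nonneg : ∀ x, 0 ≤ p x) (hp_symm : ∀ x, p (-x) = p x)
    (hsum : Summable p) (S : Finset (Fin d → ℤ)) :
    Continuous fun φ : {x // x ∈ S} → ℝ => Qc p β (extendBy S φ) := by
  have hrw : (fun φ : {x // x ∈ S} → ℝ => Qc p β (extendBy S φ))
      = fun φ => (β / 2) * ((∑ x ∈ S, ∑ y ∈ S,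
          p (x - y) * ((extendBy S φ x - extendBy S φ y) ^ 2 / 2))
        + ∑ x ∈ S, wt p S x * (extendBy S φ x) ^ 2) := by
    funext φ
    exact qformula (β := β) hp_nonneg hp_symm hsum S _ (spt_extendBy S φ)
  rw [hrw]
  have hc : ∀ x : Fin d → ℤ, Continuous fun φ : {x // x ∈ S} → ℝ => extendBy S φ x := by
    intro x
    by_cases h : x ∈ S
    · have e : (fun φ : {x // x ∈ S} → ℝ => extendBy S φ x) = fun φ => φ ⟨x, h⟩ := by
        funext φ; exact extendBy_mem S φ h
      rw [e]; exact continuous_apply _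
    · have e : (fun φ : {x // x ∈ S} → ℝ => extendBy S φ x) = fun _ => 0 := by
        funext φ; simp [extendBy, h]
      rw [e]; exact continuous_const
  apply Continuous.mul continuous_const
  apply Continuous.add
  · apply continuous_finset_sum
    intro x _
    apply continuous_finset_sum
    intro y _
    exact continuous_const.mul ((((hc x).sub (hc y)).pow 2).div_const 2)
  · apply continuous_finset_sum
    intro x _
    exact continuous_const.mul ((hc x).pow 2)

lemma integrable_expQc (hβ : 0 < β) (hp_nonneg : ∀ x, 0 ≤ p x)
    (hp_symm : ∀ x, p (-x) = p x) (hsum : Summable p)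
    {v : Fin d → ℤ} (hv : v ≠ 0) (hpv : 0 < p v) (S : Finset (Fin d → ℤ)) :
    Integrable fun φ : {x // x ∈ S} → ℝ => Real.exp (-(Qc p β (extendBy S φ))) := by
  set c := β * p v / (4 * ((S.card : ℝ) ^ 3 + 1)) with hcdef
  have hcpos : 0 < c := by positivity
  have hbound : ∀ φ : {x // x ∈ S} → ℝ,
      ‖Real.exp (-(Qc p β (extendBy S φ)))‖ ≤ ∏ i, Real.exp (-c * (φ i) ^ 2) := by
    intro φ
    rw [Real.norm_eq_abs, Real.abs_exp, ← Real.exp_sum]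
    apply Real.exp_le_exp.2
    have h1 := coercive hβ hp_nonneg hp_symm hsum hv hpv S _ (spt_extendBy S φ)
    rw [sum_sq_extendBy] at h1
    have h2 : ∑ i, -c * φ i ^ 2 = -(c * ∑ i, φ i ^ 2) := by
      rw [Finset.mul_sum, ← Finset.sum_neg_distrib]
      exact Finset.sum_congr rfl fun i _ => by ring
    rw [h2]
    rw [← hcdef] at h1
    linarith
  have hint : Integrable fun φ : {x // x ∈ S} → ℝ => ∏ i, Real.exp (-c * (φ i) ^ 2) :=
    Integrable.fintype_prod (f := fun (_ : {x // x ∈ S}) (t : ℝ) => Real.exp (-c * t ^ 2))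
      fun _ => integrable_exp_neg_mul_sq hcpos
  exact hint.mono'
    ((Real.continuous_exp.comp (continuous_QcExt hp_nonneg hp_symm hsum S).neg).aestronglyMeasurable)
    (Filter.Eventually.of_forall hbound)

lemma freeZ_pos (hβ : 0 < β) (hp_nonneg : ∀ x, 0 ≤ p x)
    (hp_symm : ∀ x, p (-x) = p x) (hsum : Summable p)
    {v : Fin d → ℤ} (hv : v ≠ 0) (hpv : 0 < p v) (S : Finset (Fin d → ℤ)) :
    0 < freeZ p β S := by
  rw [freeZ_eq]
  rw [integral_pos_iff_support_of_nonneg (fun φ => (Real.exp_pos _).le)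
    (integrable_expQc hβ hp_nonneg hp_symm hsum hv hpv S)]
  have hsupp : Function.support (fun φ : {x // x ∈ S} → ℝ =>
      Real.exp (-(Qc p β (extendBy S φ)))) = Set.univ := by
    ext φ
    simp [Function.mem_support, (Real.exp_pos _).ne']
  rw [hsupp]
  exact IsOpen.measure_pos volume isOpen_univ Set.univ_nonempty

end ExtendBy

section Kap

variable {p : (Fin d → ℤ) → ℝ} {β : ℝ}

lemma kap_pos (hβ : 0 < β) (hp_nonneg : ∀ x, 0 ≤ p x) (hp_symm : ∀ x, p (-x) = p x)
    (hsum : Summable p) {v : Fin d → ℤ} (hv : v ≠ 0) (hpv : 0 < p v)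
    (S : Finset (Fin d → ℤ)) (z : Fin d → ℤ) :
    0 < kap p β S z := by
  classical
  set S' := insert z S with hS'
  set c := β * p v / (4 * ((S'.card : ℝ) ^ 3 + 1)) with hcdef
  have hcpos : 0 < c := by positivity
  have hmemz : z ∈ S' := Finset.mem_insert_self z S
  have hne : (Qc p β '' {ψ | Spt S' ψ ∧ ψ z = 1}).Nonempty := by
    refine ⟨Qc p β (dlt z), ⟨dlt z, ⟨fun y hy => ?_, by simp [dlt]⟩, rfl⟩⟩
    have hyz : y ≠ z := fun h => hy (h ▸ hmemz)
    simp [dlt, hyz]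
  refine lt_of_lt_of_le hcpos (le_csInf hne ?_)
  rintro b ⟨ψ, ⟨hspt, hz1⟩, rfl⟩
  have h1 := coercive hβ hp_nonneg hp_symm hsum hv hpv S' ψ hspt
  have h2 : (1 : ℝ) ≤ ∑ x ∈ S', ψ x ^ 2 := by
    have h3 : ψ z ^ 2 ≤ ∑ x ∈ S', ψ x ^ 2 :=
      Finset.single_le_sum (f := fun x => ψ x ^ 2) (fun x _ => sq_nonneg _) hmemz
    rw [hz1] at h3; simpa using h3
  calc c = c * 1 := (mul_one c).symm
  _ ≤ c * ∑ x ∈ S', ψ x ^ 2 := mul_le_mul_of_nonneg_left h2 hcpos.le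
  _ ≤ Qc p β ψ := by rw [hcdef]; exact h1

lemma kap_mono (hp_nonneg : ∀ x, 0 ≤ p x) (hβ : 0 ≤ β)
    {S T : Finset (Fin d → ℤ)} (hST : S ⊆ T) (z : Fin d → ℤ) :
    kap p β T z ≤ kap p β S z := by
  apply csInf_le_csInf
  · exact ⟨0, fun b hb => by
      rcases hb with ⟨ψ, _, rfl⟩; exact Qc_nonneg hp_nonneg hβ ψ⟩
  · refine ⟨Qc p β (dlt z), ⟨dlt z, ⟨fun y hy => ?_, by simp [dlt]⟩, rfl⟩⟩
    have hyz : y ≠ z := fun h => hy (h ▸ Finset.mem_insert_self z S)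
    simp [dlt, hyz]
  · apply Set.image_mono
    intro ψ hψ
    exact ⟨fun y hy => hψ.1 y fun hmem => hy (Finset.insert_subset_insert z hST hmem), hψ.2⟩

/-- Completing the square. -/
lemma exists_decomp (hβ : 0 < β) (hp_nonneg : ∀ x, 0 ≤ p x)
    (hp_symm : ∀ x, p (-x) = p x) (hsum : Summable p)
    {v : Fin d → ℤ} (hv : v ≠ 0) (hpv : 0 < p v)
    (S : Finset (Fin d → ℤ)) {z : Fin d → ℤ} (hz : z ∉ S) :
    ∃ m : {y // y ∈ S} → ℝ,
      (∀ (φ : {y // y ∈ S} → ℝ) (t : ℝ),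
        Qc p β (extendBy S φ + t • dlt z)
          = Qc p β (extendBy S (φ - t • m)) + t ^ 2 * Qc p β (extendBy S m + dlt z)) ∧
      Qc p β (extendBy S m + dlt z) = kap p β S z := by
  classical
  set S' := insert z S with hS'
  have hzS' : z ∈ S' := Finset.mem_insert_self z S
  have hsptS : ∀ φ : {y // y ∈ S} → ℝ, Spt S' (extendBy S φ) := by
    intro φ y hy
    exact spt_extendBy S φ y fun hmem => hy (Finset.mem_insert_of_mem hmem)
  have hsptd : Spt S' (dlt z) := by
    intro y hy
    have hyz : y ≠ z := fun h => hy (h ▸ hzS')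
    simp [dlt, hyz]
  set F : ({y // y ∈ S} → ℝ) → ℝ := fun φ => Qc p β (extendBy S φ + dlt z) with hF
  have hFeq : ∀ φ, F φ = Qc p β (extendBy S φ) + Bq p β S' (extendBy S φ) (dlt z)
      + Qc p β (dlt z) := fun φ =>
    Qc_add hp_nonneg hp_symm hsum S' _ _ (hsptS φ) hsptd
  -- continuity
  have hFc : Continuous F := by
    have : Continuous fun φ : {y // y ∈ S} → ℝ => Qc p β (extendBy S φ)
        + Bq p β S' (extendBy S φ) (dlt z) + Qc p β (dlt z) := by
      apply Continuous.add
      apply Continuous.add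
      · exact continuous_QcExt hp_nonneg hp_symm hsum S
      · unfold Bq
        apply Continuous.mul continuous_const
        apply Continuous.add
        · apply continuous_finset_sum
          intro x _
          apply continuous_finset_sum
          intro y _
          exact continuous_const.mul
            ((((continuous_extendBy_apply S x).sub (continuous_extendBy_apply S y)).mul
              continuous_const))
        · apply continuous_finset_sum
          intro x _
          exact continuous_const.mul ((continuous_extendBy_apply S x).mul continuous_const)
      · exact continuous_const
    exact (continuous_congr (fun φ => (hFeq φ).symm)).mp this
  -- coercivity and minimum
  set c := β * p v / (4 * ((S'.card : ℝ) ^ 3 + 1)) with hcdef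
  have hcpos : 0 < c := by positivity
  have hlow : ∀ φ : {y // y ∈ S} → ℝ, c * ∑ i, φ i ^ 2 ≤ F φ := by
    intro φ
    have hspt' : Spt S' (extendBy S φ + dlt z) := fun y hy => by
      rw [Pi.add_apply, hsptS φ y hy, hsptd y hy]; ring
    have h1 := coercive hβ hp_nonneg hp_symm hsum hv hpv S' _ hspt'
    rw [← hcdef] at h1
    refine le_trans (mul_le_mul_of_nonneg_left ?_ hcpos.le) h1
    have hzv : (extendBy S φ + dlt z) z = 1 := by
      have : extendBy S φ z = 0 := by simp [extendBy, hz]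
      simp [this, dlt]
    have hsum' : ∑ x ∈ S', ((extendBy S φ + dlt z) x) ^ 2
        = 1 + ∑ x ∈ S, ((extendBy S φ + dlt z) x) ^ 2 := by
      rw [hS', Finset.sum_insert hz, hzv]; norm_num
    have hxS : ∀ x ∈ S, ((extendBy S φ + dlt z) x) ^ 2 = (extendBy S φ x) ^ 2 := by
      intro x hx
      have hxz : x ≠ z := fun h => hz (h ▸ hx)
      simp [dlt, hxz]
    rw [hsum', Finset.sum_congr rfl hxS, sum_sq_extendBy]
    linarith
  have htend : Filter.Tendsto F (Filter.cocompact _) Filter.atTop := by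
    have h1 : Filter.Tendsto (fun φ : {y // y ∈ S} → ℝ => ‖φ‖)
        (Filter.cocompact _) Filter.atTop := tendsto_norm_cocompact_atTop
    have h2 : Filter.Tendsto (fun r : ℝ => c * r ^ 2) Filter.atTop Filter.atTop := by
      apply Filter.Tendsto.const_mul_atTop hcpos
      exact Filter.tendsto_pow_atTop two_ne_zero
    have h3 : Filter.Tendsto (fun φ : {y // y ∈ S} → ℝ => c * ‖φ‖ ^ 2)
        (Filter.cocompact _) Filter.atTop := h2.comp h1
    apply Filter.tendsto_atTop_mono ?_ h3
    intro φ
    have hnorm : ‖φ‖ ^ 2 ≤ ∑ i, φ i ^ 2 := by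
      have hb : ‖φ‖ ≤ Real.sqrt (∑ i, φ i ^ 2) := by
        apply pi_norm_le_iff_of_nonneg (Real.sqrt_nonneg _) |>.2
        intro i
        rw [Real.norm_eq_abs, ← Real.sqrt_sq_eq_abs]
        apply Real.sqrt_le_sqrt
        exact Finset.single_le_sum (f := fun j => φ j ^ 2)
          (fun j _ => sq_nonneg _) (Finset.mem_univ i)
      calc ‖φ‖ ^ 2 ≤ Real.sqrt (∑ i, φ i ^ 2) ^ 2 := by
            apply pow_le_pow_left₀ (norm_nonneg _) hb
      _ = ∑ i, φ i ^ 2 := Real.sq_sqrt (Finset.sum_nonneg fun i _ => sq_nonneg _)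
    exact le_trans (mul_le_mul_of_nonneg_left hnorm hcpos.le) (hlow φ)
  obtain ⟨m, hm⟩ := hFc.exists_forall_le htend
  set ψs : (Fin d → ℤ) → ℝ := extendBy S m + dlt z with hψs
  have hsptψs : Spt S' ψs := fun y hy => by
    rw [hψs, Pi.add_apply, hsptS m y hy, hsptd y hy]; ring
  -- orthogonality
  have horth : ∀ χ : {y // y ∈ S} → ℝ, Bq p β S' (extendBy S χ) ψs = 0 := by
    intro χ
    have hsptχ : Spt S' (extendBy S χ) := hsptS χ
    have hQnn : 0 ≤ Qc p β (extendBy S χ) := Qc_nonneg hp_nonneg hβ.le _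
    apply first_var hQnn
    intro t
    have hext : extendBy S (m + t • χ) = extendBy S m + t • extendBy S χ := by
      funext y
      by_cases h : y ∈ S <;> simp [extendBy, h]
    have e1 : F (m + t • χ) = Qc p β (ψs + t • extendBy S χ) := by
      rw [hF]
      dsimp only
      rw [hext, hψs]
      congr 1
      funext y
      simp only [Pi.add_apply, Pi.smul_apply, smul_eq_mul]
      ring
    have hsptsm : Spt S' (t • extendBy S χ) := fun y hy => by
      rw [Pi.smul_apply, hsptχ y hy, smul_eq_mul]; ring
    have e2 : Qc p β (ψs + t • extendBy S χ)
        = Qc p β ψs + t * Bq p β S' (extendBy S χ) ψs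
          + t ^ 2 * Qc p β (extendBy S χ) := by
      rw [Qc_add hp_nonneg hp_symm hsum S' ψs (t • extendBy S χ) hsptψs hsptsm]
      rw [Bq_comm, Bq_smul_left]
      rw [Qc_smul hp_nonneg hp_symm hsum S' _ hsptχ t]
    have h1 := hm (m + t • χ)
    rw [e1, e2] at h1
    have hFm : F m = Qc p β ψs := by rw [hF, hψs]
    rw [hFm] at h1
    nlinarith [h1]
  -- the decomposition identity
  have hdec : ∀ (φ : {y // y ∈ S} → ℝ) (t : ℝ),
      Qc p β (extendBy S φ + t • dlt z)
        = Qc p β (extendBy S (φ - t • m)) + t ^ 2 * Qc p β ψs := by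
    intro φ t
    have hid : extendBy S φ + t • dlt z = extendBy S (φ - t • m) + t • ψs := by
      funext y
      by_cases h : y ∈ S
      · have hyz : y ≠ z := fun he => hz (he ▸ h)
        simp [extendBy, h, hψs, dlt, hyz]
      · simp [extendBy, h, hψs]
    rw [hid]
    have hsptφ : Spt S' (extendBy S (φ - t • m)) := hsptS _
    have hsptsm : Spt S' (t • ψs) := fun y hy => by
      rw [Pi.smul_apply, hsptψs y hy, smul_eq_mul]; ring
    rw [Qc_add hp_nonneg hp_symm hsum S' _ _ hsptφ hsptsm]
    rw [Bq_smul_right, horth (φ - t • m)]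
    rw [Qc_smul hp_nonneg hp_symm hsum S' _ hsptψs t]
    ring
  -- kap equals the minimum value
  have hψsz : ψs z = 1 := by
    have : extendBy S m z = 0 := by simp [extendBy, hz]
    simp [hψs, this, dlt]
  have hmem : Qc p β ψs ∈ Qc p β '' {ψ | Spt S' ψ ∧ ψ z = 1} :=
    ⟨ψs, ⟨hsptψs, hψsz⟩, rfl⟩
  have hkap : Qc p β ψs = kap p β S z := by
    apply le_antisymm
    · apply le_csInf ⟨_, hmem⟩
      rintro b ⟨ψ, ⟨hspt, hz1⟩, rfl⟩
      set φψ : {y // y ∈ S} → ℝ := fun i => ψ i.1 with hφψ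
      have hψeq : ψ = extendBy S φψ + (1:ℝ) • dlt z := by
        funext y
        by_cases h : y ∈ S
        · have hyz : y ≠ z := fun he => hz (he ▸ h)
          simp [extendBy, h, hφψ, dlt, hyz]
        · by_cases hyz : y = z
          · subst hyz
            simp [extendBy, h, dlt, hz1]
          · have hyS' : y ∉ S' := by
              rw [hS']
              simp [hyz, h]
            rw [hspt y hyS']
            simp [extendBy, h, dlt, hyz]
      rw [hψeq, hdec φψ 1]
      have := Qc_nonneg (β := β) hp_nonneg hβ.le (extendBy S (φψ - (1:ℝ) • m))
      nlinarith [this]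
    · exact csInf_le ⟨0, fun b hb => by
        rcases hb with ⟨ψ, _, rfl⟩; exact Qc_nonneg hp_nonneg hβ.le ψ⟩ hmem
  exact ⟨m, hdec, hkap⟩

/-- The key identity: adding one site multiplies the partition function by `√(π/κ)`. -/
lemma freeZ_insert (hβ : 0 < β) (hp_nonneg : ∀ x, 0 ≤ p x)
    (hp_symm : ∀ x, p (-x) = p x) (hsum : Summable p)
    {v : Fin d → ℤ} (hv : v ≠ 0) (hpv : 0 < p v)
    (S : Finset (Fin d → ℤ)) {z : Fin d → ℤ} (hz : z ∉ S) :
    freeZ p β (insert z S) = freeZ p β S * Real.sqrt (π / kap p β S z) := by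
  classical
  obtain ⟨m, hdec, hkap⟩ := exists_decomp hβ hp_nonneg hp_symm hsum hv hpv S hz
  have hκpos : 0 < kap p β S z := kap_pos hβ hp_nonneg hp_symm hsum hv hpv S z
  set S' := insert z S with hS'
  set P : {y // y ∈ S'} → Prop := fun a => (a : Fin d → ℤ) ∈ S with hP
  let e₁ : {y // y ∈ S} ≃ {a : {y // y ∈ S'} // P a} :=
    { toFun := fun y => ⟨⟨y.1, Finset.mem_insert_of_mem y.2⟩, y.2⟩
      invFun := fun a => ⟨a.1.1, a.2⟩
      left_inv := fun y => rfl
      right_inv := fun a => Subtype.ext (Subtype.ext rfl) }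
  haveI hU : Unique {a : {y // y ∈ S'} // ¬ P a} :=
    { default := ⟨⟨z, Finset.mem_insert_self z S⟩, hz⟩
      uniq := fun a => by
        have h1 : a.1.1 ∈ S' := a.1.2
        have h2 : ¬ (a.1.1 ∈ S) := a.2
        have h3 : a.1.1 = z := by
          rcases Finset.mem_insert.1 h1 with h | h
          · exact h
          · exact absurd h h2
        exact Subtype.ext (Subtype.ext h3) }
  let E1a : ({y // y ∈ S} → ℝ) ≃ᵐ ({a : {y // y ∈ S'} // P a} → ℝ) :=
    MeasurableEquiv.piCongrLeft (fun _ => ℝ) e₁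
  let E1b : ℝ ≃ᵐ ({a : {y // y ∈ S'} // ¬ P a} → ℝ) :=
    (MeasurableEquiv.funUnique {a : {y // y ∈ S'} // ¬ P a} ℝ).symm
  let E2 : (({a : {y // y ∈ S'} // P a} → ℝ) × ({a : {y // y ∈ S'} // ¬ P a} → ℝ))
      ≃ᵐ ({y // y ∈ S'} → ℝ) :=
    (MeasurableEquiv.piEquivPiSubtypeProd (fun _ : {y // y ∈ S'} => ℝ) P).symm
  let E : (({y // y ∈ S} → ℝ) × ℝ) ≃ᵐ ({y // y ∈ S'} → ℝ) :=
    (E1a.prodCongr E1b).trans E2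
  have hM1a : MeasurePreserving E1a volume volume := by
    have := measurePreserving_piCongrLeft (fun _ : {a : {y // y ∈ S'} // P a} => (volume : Measure ℝ)) e₁
    rw [volume_pi]
    exact this
  have hM1b : MeasurePreserving E1b volume volume := by
    have h0 := (volume_preserving_funUnique {a : {y // y ∈ S'} // ¬ P a} ℝ).symm
      (MeasurableEquiv.funUnique {a : {y // y ∈ S'} // ¬ P a} ℝ)
    convert h0 using 3 <;> rfl
  have hM2 : MeasurePreserving E2
      ((volume : Measure ({a : {y // y ∈ S'} // P a} → ℝ)).prod
        (volume : Measure ({a : {y // y ∈ S'} // ¬ P a} → ℝ)))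
      (volume : Measure ({y // y ∈ S'} → ℝ)) := by
    have h0 := measurePreserving_piEquivPiSubtypeProd
      (fun _ : {y // y ∈ S'} => (volume : Measure ℝ)) P
    have h1 := h0.symm (MeasurableEquiv.piEquivPiSubtypeProd (fun _ : {y // y ∈ S'} => ℝ) P)
    rw [volume_pi, volume_pi, volume_pi]
    convert h1 using 3 <;> exact Subsingleton.elim _ _
  have hME : MeasurePreserving E ((volume : Measure ({y // y ∈ S} → ℝ)).prod volume)
      (volume : Measure ({y // y ∈ S'} → ℝ)) :=
    hM2.comp (hM1a.prod hM1b)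
  -- pointwise description of E
  have hkey : ∀ (φ : {y // y ∈ S} → ℝ) (t : ℝ),
      extendBy S' (E (φ, t)) = extendBy S φ + t • dlt z := by
    intro φ t
    funext y
    by_cases h : y ∈ S'
    · rw [extendBy_mem S' _ h]
      have hEval : E (φ, t) ⟨y, h⟩
          = if hyS : P ⟨y, h⟩ then E1a φ ⟨⟨y, h⟩, hyS⟩ else E1b t ⟨⟨y, h⟩, hyS⟩ := by
        show E2 ((E1a.prodCongr E1b) (φ, t)) ⟨y, h⟩ = _
        rfl
      by_cases hyS : y ∈ S
      · have hyz : y ≠ z := fun he => hz (he ▸ hyS)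
        have h2 : E1a φ ⟨⟨y, h⟩, hyS⟩ = φ ⟨y, hyS⟩ := by
          exact Equiv.piCongrLeft_apply_apply (fun _ => ℝ) e₁ φ ⟨y, hyS⟩
        rw [hEval, dif_pos hyS, h2]
        simp [extendBy, hyS, dlt, hyz]
      · have hyz : y = z := by
          rcases Finset.mem_insert.1 h with h' | h'
          · exact h'
          · exact absurd h' hyS
        have h2 : E1b t ⟨⟨y, h⟩, hyS⟩ = t := rfl
        rw [hEval, dif_neg hyS, h2]
        simp [extendBy, hyS, dlt, hyz, hz]
    · rw [(spt_extendBy S' _) y h]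
      have hyS : y ∉ S := fun h' => h (Finset.mem_insert_of_mem h')
      have hyz : y ≠ z := fun he => h (he ▸ Finset.mem_insert_self z S)
      simp [extendBy, hyS, dlt, hyz]
  -- transfer the integral
  have hfZ : freeZ p β S' = ∫ w : ({y // y ∈ S} → ℝ) × ℝ,
      Real.exp (-(Qc p β (extendBy S' (E w))))
      ∂((volume : Measure ({y // y ∈ S} → ℝ)).prod volume) := by
    rw [freeZ_eq]
    exact (hME.integral_comp'
      (fun η => Real.exp (-(Qc p β (extendBy S' η))))).symm
  have hIS' := integrable_expQc hβ hp_nonneg hp_symm hsum hv hpv S'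
  have hint : Integrable (fun w : ({y // y ∈ S} → ℝ) × ℝ =>
      Real.exp (-(Qc p β (extendBy S' (E w)))))
      ((volume : Measure ({y // y ∈ S} → ℝ)).prod volume) :=
    (hME.integrable_comp_emb E.measurableEmbedding).2 hIS'
  rw [hfZ]
  rw [integral_prod_symm _ hint]
  -- inner integral computation
  have hinner : ∀ t : ℝ, (∫ φ : {y // y ∈ S} → ℝ,
      Real.exp (-(Qc p β (extendBy S' (E (φ, t))))))
      = Real.exp (-(kap p β S z * t ^ 2)) * freeZ p β S := by
    intro t
    have hptw : ∀ φ : {y // y ∈ S} → ℝ,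
        Real.exp (-(Qc p β (extendBy S' (E (φ, t)))))
        = Real.exp (-(kap p β S z * t ^ 2))
          * Real.exp (-(Qc p β (extendBy S (φ - t • m)))) := by
      intro φ
      rw [hkey φ t, hdec φ t, hkap]
      rw [← Real.exp_add]
      congr 1
      ring
    rw [integral_congr_ae (Filter.Eventually.of_forall hptw)]
    rw [integral_const_mul]
    congr 1
    have := integral_sub_right_eq_self (μ := (volume : Measure ({y // y ∈ S} → ℝ)))
      (fun φ : {y // y ∈ S} → ℝ => Real.exp (-(Qc p β (extendBy S φ)))) (t • m)
    rw [this, freeZ_eq]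
  rw [integral_congr_ae (Filter.Eventually.of_forall hinner)]
  rw [integral_mul_const]
  rw [mul_comm]
  congr 1
  have : ∀ t : ℝ, Real.exp (-(kap p β S z * t ^ 2))
      = Real.exp (-kap p β S z * t ^ 2) := fun t => by ring_nf
  rw [integral_congr_ae (Filter.Eventually.of_forall this)]
  exact integral_gaussian (kap p β S z)

end Kap

section Main

variable {p : (Fin d → ℤ) → ℝ} {β : ℝ}

lemma step_lemma (hβ : 0 < β) (hp_nonneg : ∀ x, 0 ≤ p x)
    (hp_symm : ∀ x, p (-x) = p x) (hsum : Summable p)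
    {v : Fin d → ℤ} (hv : v ≠ 0) (hpv : 0 < p v)
    {S T : Finset (Fin d → ℤ)} {z : Fin d → ℤ} (hST : S ⊆ T) (hzT : z ∉ T) :
    freeZ p β (insert z S) * freeZ p β T ≤ freeZ p β S * freeZ p β (insert z T) := by
  have hzS : z ∉ S := fun h => hzT (hST h)
  rw [freeZ_insert hβ hp_nonneg hp_symm hsum hv hpv S hzS,
    freeZ_insert hβ hp_nonneg hp_symm hsum hv hpv T hzT]
  have hκS := kap_pos hβ hp_nonneg hp_symm hsum hv hpv S z
  have hκT := kap_pos hβ hp_nonneg hp_symm hsum hv hpv T z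
  have hmono := kap_mono hp_nonneg hβ.le hST z
  have hdiv : π / kap p β S z ≤ π / kap p β T z :=
    div_le_div_of_nonneg_left (le_of_lt Real.pi_pos) hκT hmono
  have hsq : Real.sqrt (π / kap p β S z) ≤ Real.sqrt (π / kap p β T z) :=
    Real.sqrt_le_sqrt hdiv
  have hZS := freeZ_nonneg (p := p) (β := β) S
  have hZT := freeZ_nonneg (p := p) (β := β) T
  calc freeZ p β S * Real.sqrt (π / kap p β S z) * freeZ p β T
      = freeZ p β S * freeZ p β T * Real.sqrt (π / kap p β S z) := by ring
  _ ≤ freeZ p β S * freeZ p β T * Real.sqrt (π / kap p β T z) :=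
      mul_le_mul_of_nonneg_left hsq (mul_nonneg hZS hZT)
  _ = freeZ p β S * (freeZ p β T * Real.sqrt (π / kap p β T z)) := by ring

lemma main_nondeg (hβ : 0 < β) (hp_nonneg : ∀ x, 0 ≤ p x)
    (hp_symm : ∀ x, p (-x) = p x) (hsum : Summable p)
    {v : Fin d → ℤ} (hv : v ≠ 0) (hpv : 0 < p v)
    (C D : Finset (Fin d → ℤ)) :
    freeZ p β C * freeZ p β D ≤ freeZ p β (C ∩ D) * freeZ p β (C ∪ D) := by
  classical
  suffices h : ∀ (n : ℕ) (C D : Finset (Fin d → ℤ)), (D \ C).card = n →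
      freeZ p β C * freeZ p β D ≤ freeZ p β (C ∩ D) * freeZ p β (C ∪ D) from
    h _ C D rfl
  intro n
  induction n with
  | zero =>
    intro C D hcd
    have hsub : D ⊆ C := by
      rwa [Finset.card_eq_zero, Finset.sdiff_eq_empty_iff_subset] at hcd
    rw [Finset.inter_eq_right.mpr hsub, Finset.union_eq_left.mpr hsub]
    exact le_of_eq (mul_comm _ _)
  | succ n ih =>
    intro C D hcd
    have hne : (D \ C).Nonempty := by
      rw [← Finset.card_pos, hcd]; omega
    obtain ⟨x, hx⟩ := hne
    have hxD : x ∈ D := (Finset.mem_sdiff.1 hx).1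
    have hxC : x ∉ C := (Finset.mem_sdiff.1 hx).2
    set D' := D.erase x with hD'
    have hxD' : x ∉ D' := Finset.notMem_erase x D
    have hinsD : insert x D' = D := Finset.insert_erase hxD
    have hcard : (D' \ C).card = n := by
      have he : D' \ C = (D \ C).erase x := by
        ext y
        simp only [hD', Finset.mem_sdiff, Finset.mem_erase]
        tauto
      rw [he, Finset.card_erase_of_mem hx, hcd]
      omega
    have IH := ih C D' hcard
    have h3 : C ∩ D' = C ∩ D := by
      ext y
      simp only [hD', Finset.mem_inter, Finset.mem_erase]
      constructor
      · rintro ⟨h1, _, h2⟩; exact ⟨h1, h2⟩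
      · rintro ⟨h1, h2⟩; exact ⟨h1, fun he => hxC (he ▸ h1), h2⟩
    rw [h3] at IH
    have hsub : D' ⊆ C ∪ D' := Finset.subset_union_right
    have hxCT : x ∉ C ∪ D' := by
      simp only [Finset.mem_union]
      rintro (h | h)
      · exact hxC h
      · exact hxD' h
    have hstep := step_lemma hβ hp_nonneg hp_symm hsum hv hpv hsub hxCT
    have h2 : insert x (C ∪ D') = C ∪ D := by
      rw [← Finset.union_insert, hinsD]
    have hZD' := freeZ_pos hβ hp_nonneg hp_symm hsum hv hpv D'
    have hZCD' := freeZ_pos hβ hp_nonneg hp_symm hsum hv hpv (C ∪ D')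
    have hmul := mul_le_mul IH hstep
      (mul_nonneg (freeZ_nonneg _) (freeZ_nonneg _))
      (mul_nonneg (freeZ_nonneg _) (freeZ_nonneg _))
    have e1 : freeZ p β C * freeZ p β D' * (freeZ p β (insert x D') * freeZ p β (C ∪ D'))
        = (freeZ p β D' * freeZ p β (C ∪ D')) * (freeZ p β C * freeZ p β D) := by
      rw [hinsD]; ring
    have e2 : freeZ p β (C ∩ D) * freeZ p β (C ∪ D')
          * (freeZ p β D' * freeZ p β (insert x (C ∪ D')))
        = (freeZ p β D' * freeZ p β (C ∪ D'))
          * (freeZ p β (C ∩ D) * freeZ p β (C ∪ D)) := by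
      rw [h2]; ring
    rw [e1, e2] at hmul
    exact le_of_mul_le_mul_left hmul (mul_pos hZD' hZCD')

lemma freeZ_degenerate (hβ : 0 < β) (hp_nonneg : ∀ x, 0 ≤ p x)
    (hp_symm : ∀ x, p (-x) = p x) (hsum : Summable p)
    (hdeg : ∀ v : Fin d → ℤ, v ≠ 0 → p v = 0) (S : Finset (Fin d → ℤ)) :
    freeZ p β S = if S = ∅ then 1 else 0 := by
  classical
  have hQ0 : ∀ ψ, Spt S ψ → Qc p β ψ = 0 := by
    intro ψ hψ
    rw [qformula (β := β) hp_nonneg hp_symm hsum S ψ hψ]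
    have h1 : (∑ x ∈ S, ∑ y ∈ S, p (x - y) * ((ψ x - ψ y) ^ 2 / 2)) = 0 := by
      refine Finset.sum_eq_zero fun x hx => Finset.sum_eq_zero fun y hy => ?_
      by_cases hxy : x = y
      · subst hxy; simp
      · rw [hdeg (x - y) (sub_ne_zero_of_ne hxy)]; ring
    have h2 : (∑ x ∈ S, wt p S x * ψ x ^ 2) = 0 := by
      refine Finset.sum_eq_zero fun x hx => ?_
      have hw : wt p S x = 0 := by
        unfold wt
        convert tsum_zero with y
        by_cases hy : y ∈ S
        · simp [hy]
        · have hxy : x ≠ y := fun h => hy (h ▸ hx)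
          simp [hy, hdeg (x - y) (sub_ne_zero_of_ne hxy)]
      rw [hw]; ring
    rw [h1, h2]; ring
  rw [freeZ_eq]
  have hone : (fun φ : {x // x ∈ S} → ℝ => Real.exp (-(Qc p β (extendBy S φ))))
      = fun _ => (1 : ℝ) := by
    funext φ
    rw [hQ0 _ (spt_extendBy S φ)]
    simp
  rw [hone]
  by_cases hS : S = ∅
  · rw [if_pos hS]
    subst hS
    have huniv : (volume : Measure ({x // x ∈ (∅ : Finset (Fin d → ℤ))} → ℝ)) Set.univ = 1 := by
      rw [volume_pi, Measure.pi_univ]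
      simp
    rw [integral_const, measureReal_def, huniv]
    simp
  · rw [if_neg hS]
    have hne : S.Nonempty := Finset.nonempty_of_ne_empty hS
    have huniv : (volume : Measure ({x // x ∈ S} → ℝ)) Set.univ = ⊤ := by
      rw [volume_pi, Measure.pi_univ]
      simp only [MeasurableSet.univ, Real.volume_univ, Finset.prod_const]
      apply ENNReal.top_pow
      rw [Finset.card_ne_zero, Finset.univ_nonempty_iff]
      exact Finset.Nonempty.to_subtype hne
    rw [integral_const, measureReal_def, huniv]
    simp

/-- The key supermodularity inequality for partition functions. -/
lemma main_ineq (hβ : 0 < β) (hp_nonneg : ∀ x, 0 ≤ p x)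
    (hp_symm : ∀ x, p (-x) = p x) (hp_sum : ∑' x, p x = 1)
    (C D : Finset (Fin d → ℤ)) :
    freeZ p β C * freeZ p β D ≤ freeZ p β (C ∩ D) * freeZ p β (C ∪ D) := by
  have hsum := summable_p hp_nonneg hp_sum
  by_cases hnd : ∃ v, v ≠ 0 ∧ 0 < p v
  · obtain ⟨v, hv, hpv⟩ := hnd
    exact main_nondeg hβ hp_nonneg hp_symm hsum hv hpv C D
  · push_neg at hnd
    have hdeg : ∀ v : Fin d → ℤ, v ≠ 0 → p v = 0 := fun v hv =>
      le_antisymm (hnd v hv) (hp_nonneg v)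
    rw [freeZ_degenerate hβ hp_nonneg hp_symm hsum hdeg C,
      freeZ_degenerate hβ hp_nonneg hp_symm hsum hdeg D,
      freeZ_degenerate hβ hp_nonneg hp_symm hsum hdeg (C ∩ D),
      freeZ_degenerate hβ hp_nonneg hp_symm hsum hdeg (C ∪ D)]
    split_ifs <;> simp_all <;> norm_num

end Main

end NuPinAux

/-- In the Gaussian δ-pinning case, the distribution of pinned sites
satisfies the lattice (strong FKG) condition
`ν_Λ^ε(A ∪ B) ν_Λ^ε(A ∩ B) ≥ ν_Λ^ε(A) ν_Λ^ε(B)`. -/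
theorem nuPin_lattice_condition {d : ℕ} (p : (Fin d → ℤ) → ℝ) (β : ℝ) (hβ : 0 < β)
    (hp_nonneg : ∀ x, 0 ≤ p x) (hp_symm : ∀ x, p (-x) = p x)
    (hp_sum : ∑' x, p x = 1)
    (Λ : Finset (Fin d → ℤ)) (ε : ℝ) (hε : 0 < ε)
    (A B : Finset (Fin d → ℤ)) (hA : A ⊆ Λ) (hB : B ⊆ Λ) :
    nuPin p β Λ ε A * nuPin p β Λ ε B
      ≤ nuPin p β Λ ε (A ∪ B) * nuPin p β Λ ε (A ∩ B) := by
  classical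
  have hmain := NuPinAux.main_ineq hβ hp_nonneg hp_symm hp_sum (Λ \ A) (Λ \ B)
  have hset1 : (Λ \ A) ∩ (Λ \ B) = Λ \ (A ∪ B) := by
    ext y
    simp only [Finset.mem_inter, Finset.mem_sdiff, Finset.mem_union]
    tauto
  have hset2 : (Λ \ A) ∪ (Λ \ B) = Λ \ (A ∩ B) := by
    ext y
    simp only [Finset.mem_union, Finset.mem_sdiff, Finset.mem_inter]
    tauto
  rw [hset1, hset2] at hmain
  unfold nuPin
  rw [div_mul_div_comm, div_mul_div_comm]
  rcases eq_or_ne (pinZ p β Λ ε) 0 with h0 | h0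
  · rw [h0]
    simp
  · have hzz : 0 < pinZ p β Λ ε * pinZ p β Λ ε := mul_self_pos.mpr h0
    rw [div_le_div_iff₀ hzz hzz]
    have hnum : ε ^ A.card * freeZ p β (Λ \ A) * (ε ^ B.card * freeZ p β (Λ \ B))
        ≤ ε ^ (A ∪ B).card * freeZ p β (Λ \ (A ∪ B))
          * (ε ^ (A ∩ B).card * freeZ p β (Λ \ (A ∩ B))) := by
      have hcard : A.card + B.card = (A ∪ B).card + (A ∩ B).card :=
        (Finset.card_union_add_card_inter A B).symm
      calc ε ^ A.card * freeZ p β (Λ \ A) * (ε ^ B.card * freeZ p β (Λ \ B))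
          = ε ^ (A.card + B.card) * (freeZ p β (Λ \ A) * freeZ p β (Λ \ B)) := by
            rw [pow_add]; ring
      _ ≤ ε ^ (A.card + B.card)
            * (freeZ p β (Λ \ (A ∪ B)) * freeZ p β (Λ \ (A ∩ B))) :=
          mul_le_mul_of_nonneg_left hmain (pow_nonneg hε.le _)
      _ = ε ^ (A ∪ B).card * freeZ p β (Λ \ (A ∪ B))
            * (ε ^ (A ∩ B).card * freeZ p β (Λ \ (A ∩ B))) := by
            rw [hcard, pow_add]; ring
    exact mul_le_mul_of_nonneg_right hnum hzz.le
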